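/- Let ρ assign to each edge of G a failure probability with 0 < ρ e < 1. If H* is a Steiner subgraph for S that maximizes the survivable probability ∏_{e ∈ H.edgeSet}(1 − ρ e) among all Steiner subgraphs for S, then (i) H* is acyclic, and (ii) H* minimizes the total cost ∑_{e ∈ H.edgeSet} (−Real.log(1 − ρ e)) among all Steiner subgraphs for S; that is, the maximal protecting spanning tree's mapping is a minimum Steiner tree for the terminal set S with edge costs c e = −ln(1 − ρ e). (Paper's Theorem 3.) -/

import Mathlib

/-- A Steiner subgraph for the terminal set `S`: a connected subgraph of `G`
containing all terminals. -/
def IsSteinerSubgraph {V : Type*} (G : SimpleGraph V) (S : Set V) (H : G.Subgraph) :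
    Prop :=
  S ⊆ H.verts ∧ H.Connected

/-- Deleting a non-bridge edge keeps a connected graph connected. -/
lemma connected_deleteEdges_of_reachable {W : Type*} {Γ : SimpleGraph W} {u v : W}
    (hΓ : Γ.Connected) (huv : (Γ.deleteEdges {s(u, v)}).Reachable u v) :
    (Γ.deleteEdges {s(u, v)}).Connected := by
  have key : ∀ {a b : W}, Γ.Walk a b → (Γ.deleteEdges {s(u, v)}).Reachable a b := by
    intro a b p
    induction p with
    | nil => exact SimpleGraph.Reachable.refl _
    | @cons a c b h p ih =>
      refine SimpleGraph.Reachable.trans ?_ ih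
      by_cases he : s(a, c) = s(u, v)
      · rcases Sym2.eq_iff.mp he with ⟨rfl, rfl⟩ | ⟨rfl, rfl⟩
        · exact huv
        · exact huv.symm
      · exact ⟨SimpleGraph.Walk.cons (SimpleGraph.deleteEdges_adj.mpr ⟨h, he⟩)
          SimpleGraph.Walk.nil⟩
  haveI : Nonempty W := hΓ.nonempty
  exact ⟨fun a b => key (hΓ.preconnected a b).some⟩

theorem max_survivable_steiner_is_min_cost_steiner_tree
    {V : Type*} [Fintype V] (G : SimpleGraph V) (S : Set V)
    (ρ : Sym2 V → ℝ) (hρ : ∀ e ∈ G.edgeSet, 0 < ρ e ∧ ρ e < 1)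
    (Hs : G.Subgraph) (hHs : IsSteinerSubgraph G S Hs)
    (hmax : ∀ H : G.Subgraph, IsSteinerSubgraph G S H →
      ∏ e ∈ (Set.toFinite H.edgeSet).toFinset, (1 - ρ e) ≤
        ∏ e ∈ (Set.toFinite Hs.edgeSet).toFinset, (1 - ρ e)) :
    Hs.coe.IsAcyclic ∧
      ∀ H : G.Subgraph, IsSteinerSubgraph G S H →
        ∑ e ∈ (Set.toFinite Hs.edgeSet).toFinset, (-Real.log (1 - ρ e)) ≤
          ∑ e ∈ (Set.toFinite H.edgeSet).toFinset, (-Real.log (1 - ρ e)) := by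
  classical
  -- positivity of factors
  have hfac : ∀ (H : G.Subgraph) (e : Sym2 V), e ∈ H.edgeSet → 0 < 1 - ρ e := by
    intro H e he
    have := (hρ e (H.edgeSet_subset he)).2
    linarith
  have hprod_pos : ∀ H : G.Subgraph,
      0 < ∏ e ∈ (Set.toFinite H.edgeSet).toFinset, (1 - ρ e) := by
    intro H
    refine Finset.prod_pos fun e he => hfac H e ?_
    simpa using he
  constructor
  · -- acyclicity
    by_contra hcyc
    rw [SimpleGraph.isAcyclic_iff_forall_edge_isBridge] at hcyc
    push_neg at hcyc
    obtain ⟨e, heE, hnb⟩ := hcyc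
    induction e using Sym2.ind with
    | _ a b =>
    rw [SimpleGraph.mem_edgeSet] at heE
    rw [SimpleGraph.isBridge_iff] at hnb
    push_neg at hnb
    have hreach : (Hs.coe.deleteEdges {s(a, b)}).Reachable a b := by
      have := hnb
      exact this
    -- the subgraph with the edge removed
    set e' : Sym2 V := s((a : V), (b : V)) with he'
    set H' : G.Subgraph := Hs.deleteEdges {e'} with hH'
    have hpre : (Sym2.map (Subtype.val : Hs.verts → V) ⁻¹' {e'}) = {s(a, b)} := by
      ext x
      induction x using Sym2.ind with
      | _ x y =>
        simp only [Set.mem_preimage, Sym2.map_pair_eq, Set.mem_singleton_iff, he',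
          Sym2.eq_iff]
        constructor
        · rintro (⟨hx, hy⟩ | ⟨hx, hy⟩)
          · left; exact ⟨Subtype.ext hx, Subtype.ext hy⟩
          · right; exact ⟨Subtype.ext hx, Subtype.ext hy⟩
        · rintro (⟨rfl, rfl⟩ | ⟨rfl, rfl⟩) <;> simp
    have hH'conn : H'.Connected := by
      rw [SimpleGraph.Subgraph.connected_iff', hH',
        SimpleGraph.Subgraph.coe_deleteEdges_eq, hpre]
      exact connected_deleteEdges_of_reachable hHs.2.coe hreach
    have hH'steiner : IsSteinerSubgraph G S H' := by
      refine ⟨?_, hH'conn⟩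
      rw [hH', SimpleGraph.Subgraph.deleteEdges_verts]
      exact hHs.1
    -- edge sets
    have he'mem : e' ∈ Hs.edgeSet := by
      rw [he', SimpleGraph.Subgraph.mem_edgeSet]
      exact heE
    have hedge : H'.edgeSet = Hs.edgeSet \ {e'} := by
      ext x
      induction x using Sym2.ind with
      | _ x y =>
        simp [hH', SimpleGraph.Subgraph.mem_edgeSet,
          SimpleGraph.Subgraph.deleteEdges_adj, Set.mem_diff]
    have hfinset : (Set.toFinite H'.edgeSet).toFinset =
        ((Set.toFinite Hs.edgeSet).toFinset).erase e' := by
      ext x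
      rw [Set.Finite.mem_toFinset, hedge, Set.mem_diff, Set.mem_singleton_iff,
        Finset.mem_erase, Set.Finite.mem_toFinset, and_comm]
    have hlt : ∏ e ∈ (Set.toFinite Hs.edgeSet).toFinset, (1 - ρ e) <
        ∏ e ∈ (Set.toFinite H'.edgeSet).toFinset, (1 - ρ e) := by
      rw [hfinset]
      have hmem : e' ∈ (Set.toFinite Hs.edgeSet).toFinset := by simpa using he'mem
      have herase_pos : 0 < ∏ e ∈ ((Set.toFinite Hs.edgeSet).toFinset).erase e',
          (1 - ρ e) := by
        refine Finset.prod_pos fun e he => hfac Hs e ?_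
        have := Finset.mem_of_mem_erase he
        simpa using this
      calc ∏ e ∈ (Set.toFinite Hs.edgeSet).toFinset, (1 - ρ e)
          = (∏ e ∈ ((Set.toFinite Hs.edgeSet).toFinset).erase e', (1 - ρ e)) *
            (1 - ρ e') := (Finset.prod_erase_mul _ _ hmem).symm
        _ < (∏ e ∈ ((Set.toFinite Hs.edgeSet).toFinset).erase e', (1 - ρ e)) * 1 := by
            have h1 : 1 - ρ e' < 1 := by
              have := (hρ e' (Hs.edgeSet_subset he'mem)).1
              linarith
            exact mul_lt_mul_of_pos_left h1 herase_pos
        _ = _ := mul_one _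
    exact absurd (hmax H' hH'steiner) (not_le.mpr hlt)
  · -- cost minimality
    intro H hH
    have hle := hmax H hH
    have hlogsum : ∀ K : G.Subgraph,
        ∑ e ∈ (Set.toFinite K.edgeSet).toFinset, (-Real.log (1 - ρ e)) =
          -Real.log (∏ e ∈ (Set.toFinite K.edgeSet).toFinset, (1 - ρ e)) := by
      intro K
      rw [Real.log_prod fun e he => (hfac K e (by simpa using he)).ne']
      rw [← Finset.sum_neg_distrib]
    rw [hlogsum Hs, hlogsum H, neg_le_neg_iff]
    exact Real.log_le_log (hprod_pos H) hle
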